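/- Let h be a real polynomial of degree at most q with Chebyshev expansion h(x) = Σ_{j=0}^q a_j T_j(x/K) on [−K, K], and set f(θ) = h(K cos θ). Then |a_0| ≤ sup_{|x| ≤ K} |h(x)|, and for every nonnegative integer m, Σ_{j=1}^q j^m |a_j| ≤ C · sup_{θ ∈ [0,2π]} |f^(m+1)(θ)| for a universal constant C. -/

import Mathlib

open Real intervalIntegral Finset

lemma myContInt (r c : ℝ) :
    IntervalIntegrable (fun θ => Real.cos (r * θ + c)) MeasureTheory.volume 0 (2 * π) :=
  (Real.continuous_cos.comp (by fun_prop)).intervalIntegrable _ _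

lemma intCosZero (n : ℤ) (hn : n ≠ 0) (c : ℝ) :
    ∫ θ in (0:ℝ)..(2 * π), Real.cos ((n : ℝ) * θ + c) = 0 := by
  have h : ∀ θ : ℝ, HasDerivAt (fun θ => Real.sin ((n:ℝ) * θ + c) / n)
      (Real.cos ((n:ℝ) * θ + c)) θ := by
    intro θ
    have h1 : HasDerivAt (fun θ : ℝ => (n:ℝ) * θ + c) (n:ℝ) θ := by
      simpa using ((hasDerivAt_id θ).const_mul (n:ℝ)).add_const c
    have := ((Real.hasDerivAt_sin _).comp θ h1).div_const (n:ℝ)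
    refine this.congr_deriv ?_
    have : (n:ℝ) ≠ 0 := Int.cast_ne_zero.2 hn
    field_simp
  rw [intervalIntegral.integral_eq_sub_of_hasDerivAt (fun θ _ => h θ) (myContInt _ _)]
  have : (n:ℝ) * (2 * π) + c = c + n * (2 * π) := by ring
  rw [this, Real.sin_add_int_mul_two_pi]
  simp

lemma orth (j k : ℕ) (hj : 1 ≤ j) (hk : 1 ≤ k) (φ : ℝ) :
    ∫ θ in (0:ℝ)..(2 * π), Real.cos ((j:ℝ) * θ + φ) * Real.cos ((k:ℝ) * θ + φ)
      = if j = k then π else 0 := by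
  have key : ∀ θ : ℝ, Real.cos ((j:ℝ) * θ + φ) * Real.cos ((k:ℝ) * θ + φ)
      = (Real.cos ((((j:ℤ) - k : ℤ) : ℝ) * θ + 0) + Real.cos (((j:ℝ) + k) * θ + 2 * φ)) / 2 := by
    intro θ
    have h1 := Real.cos_sub ((j:ℝ) * θ + φ) ((k:ℝ) * θ + φ)
    have h2 := Real.cos_add ((j:ℝ) * θ + φ) ((k:ℝ) * θ + φ)
    have e1 : ((j:ℝ) * θ + φ) - ((k:ℝ) * θ + φ) = (((j:ℤ) - k : ℤ) : ℝ) * θ + 0 := by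
      push_cast; ring
    have e2 : ((j:ℝ) * θ + φ) + ((k:ℝ) * θ + φ) = ((j:ℝ) + k) * θ + 2 * φ := by ring
    rw [e1] at h1; rw [e2] at h2
    nlinarith [h1, h2]
  rw [intervalIntegral.integral_congr (g := fun θ =>
      (Real.cos ((((j:ℤ) - k : ℤ) : ℝ) * θ + 0) + Real.cos (((j:ℝ) + k) * θ + 2 * φ)) / 2)
      (fun θ _ => key θ)]
  have hjk : ((j:ℝ) + k) = (((j + k : ℕ) : ℤ) : ℝ) := by push_cast; ring
  rw [intervalIntegral.integral_div, intervalIntegral.integral_add (myContInt _ _) (myContInt _ _)]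
  have hne : ((j + k : ℕ) : ℤ) ≠ 0 := by exact_mod_cast (by omega : j + k ≠ 0)
  rw [hjk, intCosZero ((j+k:ℕ):ℤ) hne _]
  by_cases hjk2 : j = k
  · subst hjk2
    simp only [sub_self, Int.cast_zero, zero_mul, zero_add, Real.cos_zero, if_pos rfl]
    rw [intervalIntegral.integral_const]
    simp
  · rw [if_neg hjk2, intCosZero _ (sub_ne_zero.2 (fun hc => hjk2 (by exact_mod_cast hc))) _]
    simp

lemma derivFormula (q : ℕ) (a : ℕ → ℝ) (n : ℕ) :
    iteratedDeriv n (fun θ => ∑ j ∈ Finset.range (q + 1), a j * Real.cos ((j:ℝ) * θ))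
      = fun θ => ∑ j ∈ Finset.range (q + 1),
          a j * ((j:ℝ) ^ n * Real.cos ((j:ℝ) * θ + n * (π / 2))) := by
  induction n with
  | zero => simp
  | succ n ih =>
    rw [iteratedDeriv_succ, ih]
    funext θ
    have key : ∀ j : ℕ, HasDerivAt
        (fun θ : ℝ => a j * ((j:ℝ) ^ n * Real.cos ((j:ℝ) * θ + n * (π / 2))))
        (a j * ((j:ℝ) ^ (n+1) * Real.cos ((j:ℝ) * θ + ((n+1 : ℕ) : ℝ) * (π / 2)))) θ := by
      intro j
      have h1 : HasDerivAt (fun θ : ℝ => (j:ℝ) * θ + n * (π / 2)) (j:ℝ) θ := by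
        simpa using ((hasDerivAt_id θ).const_mul (j:ℝ)).add_const ((n:ℝ) * (π / 2))
      have h2 := ((Real.hasDerivAt_cos _).comp θ h1).const_mul (a j * (j:ℝ) ^ n)
      refine (h2.congr_deriv ?_).congr_of_eventuallyEq (Filter.Eventually.of_forall fun y => ?_)
      · rw [show ((j:ℝ) * θ + ((n+1 : ℕ) : ℝ) * (π / 2)) = ((j:ℝ) * θ + n * (π/2)) + π/2 by
          push_cast; ring, Real.cos_add_pi_div_two]
        push_cast; ring
      · simp [Function.comp, mul_assoc]
    rw [deriv_fun_sum (fun j _ => (key j).differentiableAt)]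
    exact Finset.sum_congr rfl fun j _ => (key j).deriv

lemma splitSum (q : ℕ) (t : ℕ → ℝ) :
    ∑ j ∈ Finset.range (q + 1), t j = t 0 + ∑ j ∈ Finset.Icc 1 q, t j := by
  induction q with
  | zero => simp
  | succ q ih =>
    rw [Finset.sum_range_succ, ih, Finset.sum_Icc_succ_top (by omega)]
    ring

lemma basel (q : ℕ) : ∑ j ∈ Finset.Icc 1 q, (1 / (j:ℝ)) ^ 2 ≤ 2 := by
  have key : ∀ q : ℕ, 1 ≤ q → ∑ j ∈ Finset.Icc 1 q, (1 / (j:ℝ)) ^ 2 ≤ 2 - 1 / (q:ℝ) := by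
    intro q
    induction q with
    | zero => omega
    | succ q ih =>
      intro _
      rcases Nat.eq_zero_or_pos q with hq | hq
      · subst hq; norm_num
      rw [Finset.sum_Icc_succ_top (by omega)]
      have h1 : (0:ℝ) < q := by exact_mod_cast hq
      have h2 : (0:ℝ) < q + 1 := by positivity
      have step : (1 / ((q:ℝ) + 1)) ^ 2 ≤ 1 / (q:ℝ) - 1 / ((q:ℝ) + 1) := by
        rw [div_sub_div _ _ h1.ne' h2.ne', div_pow, div_le_div_iff₀ (by positivity) (by positivity)]
        nlinarith
      have := ih hq
      push_cast
      linarith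
  rcases Nat.eq_zero_or_pos q with hq | hq
  · subst hq; norm_num
  have h1 : (0:ℝ) < q := by exact_mod_cast hq
  have : (0:ℝ) < 1 / (q:ℝ) := by positivity
  linarith [key q hq]

theorem stmt_4 :
    ∃ C : ℝ, 0 < C ∧
      ∀ (q : ℕ) (h : Polynomial ℝ) (K : ℝ) (a : ℕ → ℝ),
        h.natDegree ≤ q → 0 < K →
        (∀ x ∈ Set.Icc (-K) K,
          h.eval x = ∑ j ∈ Finset.range (q + 1),
            a j * (Polynomial.Chebyshev.T ℝ (j : ℤ)).eval (x / K)) →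
        ((∀ B : ℝ, (∀ x : ℝ, |x| ≤ K → |h.eval x| ≤ B) → |a 0| ≤ B) ∧
         ∀ (m : ℕ) (F : ℝ),
           (∀ θ ∈ Set.Icc (0 : ℝ) (2 * Real.pi),
             |iteratedDeriv (m + 1) (fun θ => h.eval (K * Real.cos θ)) θ| ≤ F) →
           ∑ j ∈ Finset.Icc 1 q, (j : ℝ) ^ m * |a j| ≤ C * F) := by
  refine ⟨2, by norm_num, fun q h K a hdeg hK hcheb => ?_⟩
  have hπ : (0:ℝ) < π := Real.pi_pos
  -- f equals the cosine polynomial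
  have hfg : (fun θ => h.eval (K * Real.cos θ))
      = fun θ => ∑ j ∈ Finset.range (q + 1), a j * Real.cos ((j:ℝ) * θ) := by
    funext θ
    have hc1 : Real.cos θ ≤ 1 := Real.cos_le_one θ
    have hc2 : -1 ≤ Real.cos θ := Real.neg_one_le_cos θ
    have hx : K * Real.cos θ ∈ Set.Icc (-K) K := by
      constructor <;> nlinarith
    rw [hcheb _ hx]
    refine Finset.sum_congr rfl fun j _ => ?_
    rw [show (K * Real.cos θ) / K = Real.cos θ by field_simp]
    rw [Polynomial.Chebyshev.T_real_cos]
    norm_num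
  constructor
  · -- part 1
    intro B hB
    have hint : (∫ θ in (0:ℝ)..(2 * π), h.eval (K * Real.cos θ)) = a 0 * (2 * π) := by
      have : (∫ θ in (0:ℝ)..(2 * π), h.eval (K * Real.cos θ))
          = ∫ θ in (0:ℝ)..(2 * π), ∑ j ∈ Finset.range (q + 1), a j * Real.cos ((j:ℝ) * θ) := by
        rw [hfg]
      rw [this, intervalIntegral.integral_finset_sum (fun j _ =>
        Continuous.intervalIntegrable (by fun_prop) _ _)]
      have e1 : ∀ j ∈ Finset.range (q + 1),
          (∫ θ in (0:ℝ)..(2 * π), a j * Real.cos ((j:ℝ) * θ))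
            = a j * (if j = 0 then 2 * π else 0) := by
        intro j _
        rw [intervalIntegral.integral_const_mul]
        congr 1
        by_cases hj : j = 0
        · subst hj; simp [intervalIntegral.integral_const]
        · rw [if_neg hj]
          have := intCosZero (j:ℤ) (by exact_mod_cast hj) 0
          simpa using this
      rw [Finset.sum_congr rfl e1, splitSum]
      simp
    have hb := intervalIntegral.norm_integral_le_of_norm_le_const
      (C := B) (f := fun θ => h.eval (K * Real.cos θ)) (a := (0:ℝ)) (b := 2 * π) ?_
    · rw [hint] at hb
      have h2π : (0:ℝ) < 2 * π := by positivity
      rw [Real.norm_eq_abs, abs_mul, abs_of_pos h2π, sub_zero, abs_of_pos h2π] at hb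
      exact le_of_mul_le_mul_right hb h2π
    · intro x _
      have : |K * Real.cos x| ≤ K := by
        rw [abs_mul, abs_of_pos hK]
        nlinarith [abs_cos_le_one x, abs_nonneg (Real.cos x)]
      simpa using hB _ this
  · -- part 2
    intro m F hF
    set φ : ℝ := ((m + 1 : ℕ) : ℝ) * (π / 2) with hφ
    set b : ℕ → ℝ := fun j => a j * (j:ℝ) ^ (m + 1) with hb
    have hD : ∀ θ, iteratedDeriv (m + 1) (fun θ => h.eval (K * Real.cos θ)) θ
        = ∑ j ∈ Finset.Icc 1 q, b j * Real.cos ((j:ℝ) * θ + φ) := by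
      intro θ
      rw [hfg, derivFormula]
      beta_reduce
      rw [splitSum q (fun j => a j * ((j:ℝ) ^ (m+1) * Real.cos ((j:ℝ) * θ + (m+1 : ℕ) * (π / 2))))]
      simp only [Nat.cast_zero, zero_mul, zero_add, zero_pow (Nat.succ_ne_zero m), mul_zero,
        zero_mul, zero_add]
      exact Finset.sum_congr rfl fun j _ => by simp only [hb, hφ, mul_assoc]
    have hF0 : 0 ≤ F := le_trans (abs_nonneg _) (hF 0 ⟨le_refl 0, by positivity⟩)
    -- Parseval
    have hI : (∫ θ in (0:ℝ)..(2 * π),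
        (iteratedDeriv (m + 1) (fun θ => h.eval (K * Real.cos θ)) θ) ^ 2)
        = π * ∑ j ∈ Finset.Icc 1 q, (b j) ^ 2 := by
      have e0 : (∫ θ in (0:ℝ)..(2 * π),
          (iteratedDeriv (m + 1) (fun θ => h.eval (K * Real.cos θ)) θ) ^ 2)
          = ∫ θ in (0:ℝ)..(2 * π), ∑ j ∈ Finset.Icc 1 q, ∑ k ∈ Finset.Icc 1 q,
              (b j * b k) * (Real.cos ((j:ℝ) * θ + φ) * Real.cos ((k:ℝ) * θ + φ)) := by
        congr 1; funext θ
        rw [hD θ, sq, Finset.sum_mul_sum]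
        exact Finset.sum_congr rfl fun j _ => Finset.sum_congr rfl fun k _ => by ring
      rw [e0, intervalIntegral.integral_finset_sum (fun j _ => ?_)]
      swap
      · exact (Continuous.intervalIntegrable (by
          exact continuous_finset_sum _ fun k _ => by fun_prop) _ _)
      have e1 : ∀ j ∈ Finset.Icc 1 q,
          (∫ θ in (0:ℝ)..(2 * π), ∑ k ∈ Finset.Icc 1 q,
            (b j * b k) * (Real.cos ((j:ℝ) * θ + φ) * Real.cos ((k:ℝ) * θ + φ)))
          = (b j) ^ 2 * π := by
        intro j hj
        rw [intervalIntegral.integral_finset_sum (fun k _ =>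
          (((myContInt j φ).mul_continuousOn (by fun_prop)).const_mul (b j * b k)))]
        have e2 : ∀ k ∈ Finset.Icc 1 q,
            (∫ θ in (0:ℝ)..(2 * π),
              (b j * b k) * (Real.cos ((j:ℝ) * θ + φ) * Real.cos ((k:ℝ) * θ + φ)))
            = (b j * b k) * (if j = k then π else 0) := by
          intro k hk
          rw [intervalIntegral.integral_const_mul,
            orth j k (Finset.mem_Icc.1 hj).1 (Finset.mem_Icc.1 hk).1 φ]
        rw [Finset.sum_congr rfl e2, Finset.sum_eq_single_of_mem j hj
          (fun k _ hkj => by rw [if_neg (Ne.symm hkj)]; ring)]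
        rw [if_pos rfl]; ring
      rw [Finset.sum_congr rfl e1, ← Finset.sum_mul]
      ring
    -- bound the integral
    have hIle : (∫ θ in (0:ℝ)..(2 * π),
        (iteratedDeriv (m + 1) (fun θ => h.eval (K * Real.cos θ)) θ) ^ 2)
        ≤ 2 * π * F ^ 2 := by
      have : (∫ θ in (0:ℝ)..(2 * π), F ^ 2) = 2 * π * F ^ 2 := by
        simp [intervalIntegral.integral_const, mul_comm]
      rw [← this]
      apply intervalIntegral.integral_mono_on (by positivity)
      · apply Continuous.intervalIntegrable
        have : Continuous (fun θ => ∑ j ∈ Finset.Icc 1 q, b j * Real.cos ((j:ℝ) * θ + φ)) :=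
          continuous_finset_sum _ fun k _ => by fun_prop
        exact (this.congr (fun θ => (hD θ).symm)).pow 2
      · exact intervalIntegrable_const
      · intro θ hθ
        have := hF θ hθ
        calc (iteratedDeriv (m + 1) (fun θ => h.eval (K * Real.cos θ)) θ) ^ 2
            = |iteratedDeriv (m + 1) (fun θ => h.eval (K * Real.cos θ)) θ| ^ 2 := (sq_abs _).symm
          _ ≤ F ^ 2 := by
              apply pow_le_pow_left₀ (abs_nonneg _) this
    have hsumb : ∑ j ∈ Finset.Icc 1 q, (b j) ^ 2 ≤ 2 * F ^ 2 := by
      rw [hI] at hIle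
      nlinarith
    -- Cauchy–Schwarz
    have hcs := Finset.sum_mul_sq_le_sq_mul_sq (Finset.Icc 1 q)
      (fun j => 1 / (j:ℝ)) (fun j => |b j|)
    have hmatch : ∀ j ∈ Finset.Icc 1 q, (1 / (j:ℝ)) * |b j| = (j:ℝ) ^ m * |a j| := by
      intro j hj
      have hj1 : 1 ≤ j := (Finset.mem_Icc.1 hj).1
      have hj0 : (0:ℝ) < j := by exact_mod_cast hj1
      rw [hb]
      simp only [abs_mul, abs_pow, abs_of_pos hj0]
      rw [pow_succ]
      field_simp
    have habs : ∀ j, |b j| ^ 2 = (b j) ^ 2 := fun j => sq_abs _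
    set S := ∑ j ∈ Finset.Icc 1 q, (j:ℝ) ^ m * |a j| with hS
    have hS0 : 0 ≤ S := Finset.sum_nonneg fun j _ => by positivity
    have hS2 : S ^ 2 ≤ 4 * F ^ 2 := by
      rw [hS, ← Finset.sum_congr rfl hmatch]
      calc (∑ j ∈ Finset.Icc 1 q, (1 / (j:ℝ)) * |b j|) ^ 2
          ≤ (∑ j ∈ Finset.Icc 1 q, (1 / (j:ℝ)) ^ 2) * ∑ j ∈ Finset.Icc 1 q, |b j| ^ 2 := hcs
        _ ≤ 2 * (2 * F ^ 2) := by
            apply mul_le_mul (basel q) ?_ ?_ (by norm_num)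
            · rw [Finset.sum_congr rfl fun j _ => habs j]; exact hsumb
            · exact Finset.sum_nonneg fun j _ => by positivity
        _ = 4 * F ^ 2 := by ring
    nlinarith
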